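/- For 0 ≤ x < 1 and s ∈ [0,π], let P₁(x,s) = (2/π)·x(1−x)(1−x²)·sin s / (1 − 2x cos s + x²)². Then for every continuous function φ : [0,π] → ℝ, lim_{x→1⁻} ∫₀^π P₁(x,s) φ(s) ds = (2/π) φ(0). -/

import Mathlib

open MeasureTheory Filter Topology Real intervalIntegral

noncomputable section

/-- The kernel `P₁(x,s) = -(1-x) ∂_s P₀(x,s)` where `P₀` is the Poisson kernel. -/
def P1 (x s : ℝ) : ℝ :=
  (2 / π) * (x * (1 - x) * (1 - x ^ 2) * Real.sin s / (1 - 2 * x * Real.cos s + x ^ 2) ^ 2)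

lemma D_pos {x : ℝ} (s : ℝ) (hx0 : 0 ≤ x) (hx1 : x < 1) :
    0 < 1 - 2 * x * Real.cos s + x ^ 2 := by
  nlinarith [Real.cos_le_one s, Real.neg_one_le_cos s, sq_nonneg (1 - x)]

lemma P1_continuous {x : ℝ} (hx0 : 0 ≤ x) (hx1 : x < 1) : Continuous (P1 x) := by
  unfold P1
  refine continuous_const.mul (Continuous.div (by continuity) (by continuity) fun s => ?_)
  exact pow_ne_zero _ (D_pos s hx0 hx1).ne'

lemma hasDerivAt_F {x : ℝ} (hx0 : 0 ≤ x) (hx1 : x < 1) (s : ℝ) :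
    HasDerivAt (fun s => -((1 - x) * (1 - x ^ 2) / π * (1 - 2 * x * Real.cos s + x ^ 2)⁻¹))
      (P1 x s) s := by
  have hD : HasDerivAt (fun s => 1 - 2 * x * Real.cos s + x ^ 2) (2 * x * Real.sin s) s := by
    have h1 := ((Real.hasDerivAt_cos s).const_mul (2 * x)).const_sub 1
    have h2 := h1.add_const (x ^ 2)
    exact h2.congr_deriv (by ring)
  have hne := (D_pos s hx0 hx1).ne'
  have h3 := (hD.inv hne).const_mul ((1 - x) * (1 - x ^ 2) / π)
  have h4 := h3.neg
  refine h4.congr_deriv ?_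
  unfold P1
  field_simp

lemma integral_P1 {x : ℝ} (hx : x ∈ Set.Ioo (0:ℝ) 1) :
    ∫ s in (0:ℝ)..π, P1 x s = 4 * x / (π * (1 + x)) := by
  obtain ⟨hx0, hx1⟩ := hx
  rw [intervalIntegral.integral_eq_sub_of_hasDerivAt
      (fun s _ => hasDerivAt_F hx0.le hx1 s)
      ((P1_continuous hx0.le hx1).intervalIntegrable 0 π)]
  have h1 : (1:ℝ) - x ≠ 0 := by linarith
  have h2 : (1:ℝ) + x ≠ 0 := by linarith
  rw [Real.cos_pi, Real.cos_zero]
  have e1 : 1 - 2 * x * (-1 : ℝ) + x ^ 2 = (1 + x) ^ 2 := by ring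
  have e2 : 1 - 2 * x * (1 : ℝ) + x ^ 2 = (1 - x) ^ 2 := by ring
  rw [e1, e2]
  field_simp
  ring

set_option maxHeartbeats 1000000 in
/-- `P₁(x,·)` is an approximate identity at `0` as `x → 1⁻`:
`∫₀^π P₁(x,s) φ(s) ds → (2/π) φ(0)` for every continuous `φ` on `[0,π]`. -/
theorem P1_approximate_identity (φ : ℝ → ℝ) (hφ : ContinuousOn φ (Set.Icc 0 π)) :
    Tendsto (fun x => ∫ s in (0 : ℝ)..π, P1 x s * φ s)
      (nhdsWithin 1 (Set.Iio 1)) (𝓝 ((2 / π) * φ 0)) := by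
  have hπ : (0:ℝ) < π := Real.pi_pos
  have hπ' : (π:ℝ) ≠ 0 := hπ.ne'
  have hmemIoo : Set.Ioo (0:ℝ) 1 ∈ nhdsWithin (1:ℝ) (Set.Iio 1) := by
    apply Ioo_mem_nhdsLT_of_mem
    constructor <;> norm_num
  have key : Tendsto (fun x => ∫ s in Set.Icc (0:ℝ) π, (π / 2 * P1 x s) • φ s)
      (nhdsWithin 1 (Set.Iio 1)) (𝓝 (φ 0)) := by
    apply tendsto_setIntegral_peak_smul_of_integrableOn_of_tendsto
      (s := Set.Icc (0:ℝ) π) (t := Set.Icc (0:ℝ) π) (x₀ := (0:ℝ))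
      measurableSet_Icc measurableSet_Icc subset_rfl self_mem_nhdsWithin
      (by simp)
    · -- nonneg
      filter_upwards [hmemIoo] with x hx
      intro s hs
      have hsin : 0 ≤ Real.sin s := Real.sin_nonneg_of_nonneg_of_le_pi hs.1 hs.2
      unfold P1
      have : 0 ≤ x * (1 - x) * (1 - x ^ 2) * Real.sin s := by
        have h1 : (0:ℝ) ≤ 1 - x := by linarith [hx.2]
        have h2 : (0:ℝ) ≤ 1 - x ^ 2 := by nlinarith [hx.1, hx.2]
        exact mul_nonneg (mul_nonneg (mul_nonneg hx.1.le h1) h2) hsin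
      have h2π : (0:ℝ) ≤ 2 / π := by positivity
      have hπ2 : (0:ℝ) ≤ π / 2 := by positivity
      exact mul_nonneg hπ2 (mul_nonneg h2π
        (div_nonneg this (sq_nonneg (1 - 2 * x * Real.cos s + x ^ 2))))
    · -- uniform smallness away from 0
      intro u hu hu0
      obtain ⟨δ, hδ0, hδ⟩ := Metric.isOpen_iff.1 hu 0 hu0
      set δ' : ℝ := min δ π with hδ'
      have hδ'0 : 0 < δ' := lt_min hδ0 hπ
      have hδ'π : δ' ≤ π := min_le_right _ _
      set m : ℝ := 1 - Real.cos δ' with hm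
      have hm0 : 0 < m := by
        have := Real.cos_lt_cos_of_nonneg_of_le_pi le_rfl hδ'π hδ'0
        rw [Real.cos_zero] at this
        rw [hm]; linarith
      have hδ'δ : δ' ≤ min δ π := le_of_eq hδ'
      clear_value δ' m
      have hδ'δ2 : δ' ≤ δ := hδ'δ.trans (min_le_left _ _)
      rw [Metric.tendstoUniformlyOn_iff]
      intro ε hε
      have hset : Set.Ioo (max (1/2) (1 - ε * m ^ 2 / 2)) 1 ∈ nhdsWithin (1:ℝ) (Set.Iio 1) := by
        apply Ioo_mem_nhdsLT_of_mem
        constructor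
        · apply max_lt (by norm_num)
          have : 0 < ε * m ^ 2 := by positivity
          linarith
        · exact le_refl 1
      filter_upwards [hset] with x hx s hs
      obtain ⟨hx12, hx1⟩ := hx
      have hx12' : (1:ℝ)/2 < x := lt_of_le_of_lt (le_max_left _ _) hx12
      have hxε : 1 - ε * m ^ 2 / 2 < x := lt_of_le_of_lt (le_max_right _ _) hx12
      have hx0 : (0:ℝ) < x := by linarith
      obtain ⟨hs1, hs2⟩ := hs
      -- s ≥ δ'
      have hsδ : δ' ≤ s := by
        by_contra h
        push_neg at h
        exact hs2 (hδ (by simp only [Metric.mem_ball, Real.dist_eq, sub_zero,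
          abs_of_nonneg hs1.1]; linarith))
      have hcos : Real.cos s ≤ Real.cos δ' := by
        exact Real.cos_le_cos_of_nonneg_of_le_pi hδ'0.le hs1.2 hsδ
      have hD : m ≤ 1 - 2 * x * Real.cos s + x ^ 2 := by
        rw [hm]
        nlinarith [sq_nonneg (1 - x),
          mul_nonneg (by linarith : (0:ℝ) ≤ 2 * x - 1)
            (by nlinarith [Real.cos_le_one s] : (0:ℝ) ≤ 1 - Real.cos s)]
      have hD0 : (0:ℝ) < 1 - 2 * x * Real.cos s + x ^ 2 := lt_of_lt_of_le hm0 hD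
      rw [Pi.zero_apply, Real.dist_eq]
      have hval : π / 2 * P1 x s =
          x * (1 - x) * (1 - x ^ 2) * Real.sin s / (1 - 2 * x * Real.cos s + x ^ 2) ^ 2 := by
        unfold P1; field_simp
      rw [hval]
      have hsin0 : 0 ≤ Real.sin s := Real.sin_nonneg_of_nonneg_of_le_pi hs1.1 hs1.2
      have h1x : (0:ℝ) ≤ 1 - x := by linarith
      have h1x2 : (0:ℝ) ≤ 1 - x ^ 2 := by nlinarith
      have hsle := Real.sin_le_one s
      have hb : x * (1 - x ^ 2) ≤ 1 := by nlinarith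
      have ha : x * (1 - x ^ 2) * Real.sin s ≤ 1 := by
        have := mul_le_mul hb hsle hsin0 zero_le_one
        simpa using this
      have hnum : x * (1 - x) * (1 - x ^ 2) * Real.sin s ≤ 1 - x := by
        calc x * (1 - x) * (1 - x ^ 2) * Real.sin s
            = (1 - x) * (x * (1 - x ^ 2) * Real.sin s) := by ring
          _ ≤ (1 - x) * 1 := mul_le_mul_of_nonneg_left ha h1x
          _ = 1 - x := mul_one _
      have hnum0 : 0 ≤ x * (1 - x) * (1 - x ^ 2) * Real.sin s :=
        mul_nonneg (mul_nonneg (mul_nonneg hx0.le h1x) h1x2) hsin0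
      have habs : |0 - x * (1 - x) * (1 - x ^ 2) * Real.sin s / (1 - 2 * x * Real.cos s + x ^ 2) ^ 2|
          = x * (1 - x) * (1 - x ^ 2) * Real.sin s / (1 - 2 * x * Real.cos s + x ^ 2) ^ 2 := by
        rw [zero_sub, abs_neg, abs_of_nonneg (by positivity)]
      rw [habs]
      have hDsq : m ^ 2 ≤ (1 - 2 * x * Real.cos s + x ^ 2) ^ 2 := by
        exact pow_le_pow_left₀ hm0.le hD 2
      calc x * (1 - x) * (1 - x ^ 2) * Real.sin s / (1 - 2 * x * Real.cos s + x ^ 2) ^ 2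
          ≤ (1 - x) / m ^ 2 := by
            exact div_le_div₀ (by linarith) hnum (by positivity) hDsq
        _ < ε := by
            have hpos : 0 < ε * m ^ 2 := mul_pos hε (pow_pos hm0 2)
            rw [div_lt_iff₀ (pow_pos hm0 2)]
            linarith
    · -- integral tends to 1
      have heq : ∀ x ∈ Set.Ioo (0:ℝ) 1,
          (∫ s in Set.Icc (0:ℝ) π, π / 2 * P1 x s) = 2 * x / (1 + x) := by
        intro x hx
        rw [MeasureTheory.integral_Icc_eq_integral_Ioc,
          ← intervalIntegral.integral_of_le hπ.le, intervalIntegral.integral_const_mul,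
          integral_P1 hx]
        have h2 : (1:ℝ) + x ≠ 0 := by linarith [hx.1]
        field_simp
        ring
      have h2 : Tendsto (fun x : ℝ => 2 * x / (1 + x)) (nhdsWithin 1 (Set.Iio 1)) (𝓝 1) := by
        have hc : ContinuousAt (fun x : ℝ => 2 * x / (1 + x)) 1 := by
          apply ContinuousAt.div (by fun_prop) (by fun_prop); norm_num
        have h3 : Tendsto (fun x : ℝ => 2 * x / (1 + x)) (nhdsWithin 1 (Set.Iio 1))
            (𝓝 (2 * 1 / (1 + 1))) := hc.tendsto.mono_left nhdsWithin_le_nhds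
        norm_num at h3
        exact h3
      apply h2.congr'
      filter_upwards [hmemIoo] with x hx
      exact (heq x hx).symm
    · -- measurability
      filter_upwards [hmemIoo] with x hx
      exact (continuous_const.mul (P1_continuous hx.1.le hx.2)).aestronglyMeasurable.restrict
    · exact hφ.integrableOn_Icc
    · exact (hφ 0 ⟨le_refl 0, hπ.le⟩).tendsto
  have final := key.const_mul (2 / π)
  have hval : (2 / π) * φ 0 = 2 / π * φ 0 := rfl
  apply Tendsto.congr ?_ final
  intro x
  rw [← MeasureTheory.integral_const_mul, MeasureTheory.integral_Icc_eq_integral_Ioc,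
    ← intervalIntegral.integral_of_le hπ.le]
  congr 1 with s
  simp only [smul_eq_mul]
  field_simp
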